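/- Let f(w) = g(w) + λ‖w‖₁ with g convex differentiable, and let δ ≠ 0 satisfy q(δ) = ∇g(w)ᵀδ + (1/2)δᵀHδ + λ‖w+δ‖₁ − λ‖w‖₁ < 0 for a symmetric positive definite H. Then δ is a descent direction for f at w: there exists t̄ > 0 such that f(w + tδ) < f(w) for all t ∈ (0, t̄]. -/

import Mathlib

open Matrix

theorem stmt_19 (d : ℕ) (g : (Fin d → ℝ) → ℝ) (lam : ℝ) (hlam : 0 ≤ lam)
    (hgconv : ConvexOn ℝ Set.univ g) (hgdiff : Differentiable ℝ g)
    (f : (Fin d → ℝ) → ℝ) (hf : ∀ v, f v = g v + lam * ∑ j, |v j|)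
    (H : Matrix (Fin d) (Fin d) ℝ) (hH : H.PosDef)
    (w δ : Fin d → ℝ) (hδ : δ ≠ 0)
    (hq : fderiv ℝ g w δ + (1 / 2) * (δ ⬝ᵥ (H *ᵥ δ))
        + lam * ∑ j, |w j + δ j| - lam * ∑ j, |w j| < 0) :
    ∃ tbar > 0, ∀ t ∈ Set.Ioc (0 : ℝ) tbar, f (w + t • δ) < f w := by
  set c : ℝ := fderiv ℝ g w δ with hc
  set ε : ℝ := (1 / 2) * (δ ⬝ᵥ (H *ᵥ δ)) with hε
  have hεpos : 0 < ε := by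
    have := hH.dotProduct_mulVec_pos hδ
    simp at this
    positivity
  set φ : ℝ → ℝ := fun t => g (w + t • δ) with hφ
  have hinner : HasDerivAt (fun t : ℝ => w + t • δ) δ 0 := by
    simpa using ((hasDerivAt_id (0:ℝ)).smul_const δ).const_add w
  have hderiv : HasDerivAt φ c 0 := by
    have h0 : HasFDerivAt g (fderiv ℝ g w) (w + (0:ℝ) • δ) := by
      simpa using (hgdiff w).hasFDerivAt
    exact h0.comp_hasDerivAt 0 hinner
  have hslope := hasDerivAt_iff_tendsto_slope.mp hderiv
  have hslope' : Filter.Tendsto (slope φ 0) (nhdsWithin 0 (Set.Ioi 0)) (nhds c) :=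
    hslope.mono_left (nhdsWithin_mono _ (fun x hx => ne_of_gt hx))
  have hev : ∀ᶠ t in nhdsWithin 0 (Set.Ioi 0), slope φ 0 t < c + ε :=
    hslope'.eventually_lt_const (by linarith)
  rw [eventually_nhdsWithin_iff] at hev
  rcases Metric.eventually_nhds_iff.mp hev with ⟨u, hu, hball⟩
  refine ⟨min (u/2) 1, by positivity, ?_⟩
  intro t ht
  obtain ⟨ht0, htle⟩ := ht
  have ht1 : t ≤ 1 := le_trans htle (min_le_right _ _)
  have htu : dist t 0 < u := by
    rw [Real.dist_eq, sub_zero, abs_of_pos ht0]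
    have : t ≤ u / 2 := le_trans htle (min_le_left _ _)
    linarith
  have hsl : slope φ 0 t < c + ε := hball htu ht0
  rw [slope_def_field] at hsl
  have hgbd : φ t < φ 0 + t * (c + ε) := by
    have : (φ t - φ 0) / (t - 0) < c + ε := by
      simpa [div_eq_div_iff] using hsl
    rw [sub_zero, div_lt_iff₀ ht0] at this
    linarith
  have hl1 : ∑ j, |w j + t * δ j| ≤ (1 - t) * ∑ j, |w j| + t * ∑ j, |w j + δ j| := by
    rw [Finset.mul_sum, Finset.mul_sum, ← Finset.sum_add_distrib]
    apply Finset.sum_le_sum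
    intro j _
    have : w j + t * δ j = (1 - t) * w j + t * (w j + δ j) := by ring
    rw [this]
    calc |(1 - t) * w j + t * (w j + δ j)| ≤ |(1 - t) * w j| + |t * (w j + δ j)| := abs_add_le _ _
      _ = (1 - t) * |w j| + t * |w j + δ j| := by
          rw [abs_mul, abs_mul, abs_of_nonneg (by linarith), abs_of_nonneg ht0.le]
  have hkey : c + ε + lam * ∑ j, |w j + δ j| - lam * ∑ j, |w j| < 0 := by
    rw [hc, hε]; linarith
  have hf1 := hf (w + t • δ)
  have hf2 := hf w
  have hφt : f (w + t • δ) = φ t + lam * ∑ j, |w j + t * δ j| := by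
    rw [hf1]; simp [hφ, Pi.add_apply, Pi.smul_apply, smul_eq_mul]
  have hφ0 : f w = φ 0 + lam * ∑ j, |w j| := by rw [hf2]; simp [hφ]
  rw [hφt, hφ0]
  have hlam1 : lam * ∑ j, |w j + t * δ j| ≤ lam * ((1 - t) * ∑ j, |w j| + t * ∑ j, |w j + δ j|) :=
    mul_le_mul_of_nonneg_left hl1 hlam
  nlinarith [mul_pos ht0 (neg_pos.mpr hkey)]
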